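/- For Hermitian operators A and B on a finite-dimensional complex Hilbert space, the operator norm of e^{iA} - e^{iB} is at most the operator norm of A - B. -/

import Mathlib

open scoped Matrix.Norms.L2Operator
open Matrix NormedSpace

lemma aux_norm_exp_skew {N : ℕ} (X : Matrix (Fin N) (Fin N) ℂ) (hX : star X = -X) :
    ‖exp X‖ ≤ 1 := by
  rcases subsingleton_or_nontrivial (Matrix (Fin N) (Fin N) ℂ) with h | h
  · rw [Subsingleton.elim (exp X) 0, norm_zero]; norm_num
  · have h1 : star (exp X) * exp X = 1 := by
      rw [star_exp, hX, ← Matrix.exp_add_of_commute _ _ (Commute.refl X).neg_left, neg_add_cancel, exp_zero]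
    have h2 : ‖star (exp X) * exp X‖ = ‖exp X‖ * ‖exp X‖ :=
      CStarRing.norm_star_mul_self
    rw [h1, norm_one] at h2
    nlinarith [norm_nonneg (exp X)]

set_option maxHeartbeats 1000000 in
/-- **Lipschitz continuity of `e^{iX}` in the Hermitian generator.**
For Hermitian operators `A`, `B` on a finite-dimensional complex Hilbert space (represented as
matrices, with `‖·‖` the L2 operator norm), `‖e^{iA} - e^{iB}‖ ≤ ‖A - B‖`. -/
theorem norm_exp_I_smul_sub_exp_I_smul_le {N : ℕ}
    (A B : Matrix (Fin N) (Fin N) ℂ) (hA : A.IsHermitian) (hB : B.IsHermitian) :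
    ‖NormedSpace.exp (Complex.I • A) - NormedSpace.exp (Complex.I • B)‖ ≤ ‖A - B‖ := by
  have hrc : (exp : Matrix (Fin N) (Fin N) ℂ → _) = exp := rfl
  set x := Complex.I • A with hx
  set y := Complex.I • B with hy
  have hxskew : star x = -x := by
    rw [hx, star_smul, star_eq_conjTranspose, hA.eq, Complex.star_def, Complex.conj_I, neg_smul]
  have hyskew : star y = -y := by
    rw [hy, star_smul, star_eq_conjTranspose, hB.eq, Complex.star_def, Complex.conj_I, neg_smul]
  set g : ℝ → Matrix (Fin N) (Fin N) ℂ := fun t => exp (t • x) * exp ((1 - t) • y) with hg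
  have hderiv : ∀ t : ℝ, HasDerivAt g
      (exp (t • x) * ((x - y) * exp ((1 - t) • y))) t := by
    intro t
    have d1 : HasDerivAt (fun t : ℝ => exp (t • x)) (exp (t • x) * x) t :=
      hasDerivAt_exp_smul_const x t
    have d2' : HasDerivAt (fun u : ℝ => exp (u • y)) (y * exp ((1 - t) • y)) (1 - t) :=
      hasDerivAt_exp_smul_const' y (1 - t)
    have d2 : HasDerivAt (fun t : ℝ => exp ((1 - t) • y))
        (-(y * exp ((1 - t) • y))) t := by
      have := d2'.scomp t ((hasDerivAt_id t).const_sub 1)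
      simp at this
      exact this
    have := d1.mul d2
    exact this.congr_deriv (by noncomm_ring)
  have key : ∀ t ∈ Set.Icc (0:ℝ) 1, ‖exp (t • x) * ((x - y) * exp ((1 - t) • y))‖ ≤ ‖A - B‖ := by
    intro t _
    have e1 : ‖exp (t • x)‖ ≤ 1 := by
      apply aux_norm_exp_skew
      rw [star_smul, hxskew]
      simp
    have e2 : ‖exp ((1 - t) • y)‖ ≤ 1 := by
      apply aux_norm_exp_skew
      rw [star_smul, hyskew]
      simp
    have e3 : ‖x - y‖ = ‖A - B‖ := by
      rw [hx, hy, ← smul_sub, norm_smul, Complex.norm_I, one_mul]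
    calc ‖exp (t • x) * ((x - y) * exp ((1 - t) • y))‖
        ≤ ‖exp (t • x)‖ * (‖x - y‖ * ‖exp ((1 - t) • y)‖) :=
          (norm_mul_le _ _).trans (by gcongr; exact norm_mul_le _ _)
      _ ≤ 1 * (‖A - B‖ * 1) := by rw [← e3]; gcongr
      _ = ‖A - B‖ := by ring
  have mvt := (convex_Icc (0:ℝ) 1).norm_image_sub_le_of_norm_hasDerivWithin_le
    (fun t ht => (hderiv t).hasDerivWithinAt) key
    (Set.left_mem_Icc.2 zero_le_one) (Set.right_mem_Icc.2 zero_le_one)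
  have hg1 : g 1 = exp x := by
    simp [hg, hrc]
  have hg0 : g 0 = exp y := by
    simp [hg, hrc]
  simpa [hg1, hg0] using mvt
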